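/- Let S = Sg⟨X|R⟩ be a semigroup given by an Adian presentation (a positive presentation whose left graph and right graph are both cycle-free). Then S contains no idempotent element; that is, there is no w ∈ X⁺ with w = w² in S. -/

import Mathlib

/-- The first letter of a nonempty positive word. -/
def firstLetter {X : Type*} (u : FreeSemigroup X) : X := u.head

/-- The last letter of a nonempty positive word. -/
def lastLetter {X : Type*} (u : FreeSemigroup X) : X :=
  (u.head :: u.tail).getLast (List.cons_ne_nil _ _)

/-- The start vertex of an oriented edge of the (left or right) graph of a positive
presentation. -/
def edgeStart {X : Type*} (side : FreeSemigroup X → X)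
    (s : (FreeSemigroup X × FreeSemigroup X) × Bool) : X :=
  if s.2 then side s.1.1 else side s.1.2

/-- The end vertex of an oriented edge. -/
def edgeEnd {X : Type*} (side : FreeSemigroup X → X)
    (s : (FreeSemigroup X × FreeSemigroup X) × Bool) : X :=
  if s.2 then side s.1.2 else side s.1.1

/-- A cycle in the undirected graph on vertex set `X` whose edges are the relations of
`R`, the endpoints of the edge of a relation `(u,v)` being `side u` and `side v`. -/
def HasCycle {X : Type*} (R : Set (FreeSemigroup X × FreeSemigroup X))
    (side : FreeSemigroup X → X) : Prop :=
  ∃ es : List ((FreeSemigroup X × FreeSemigroup X) × Bool),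
    es ≠ [] ∧ (∀ s ∈ es, s.1 ∈ R) ∧
    es.Chain' (fun s t => edgeEnd side s = edgeStart side t) ∧
    (∀ hne : es ≠ [], edgeEnd side (es.getLast hne) = edgeStart side (es.head hne)) ∧
    (es.map Prod.fst).Nodup

namespace AdianAux

variable {X : Type*}

abbrev Rel (X : Type*) := FreeSemigroup X × FreeSemigroup X

def toL (u : FreeSemigroup X) : List X := u.head :: u.tail

lemma toL_ne_nil (u : FreeSemigroup X) : toL u ≠ [] := List.cons_ne_nil _ _

lemma toL_mul (u v : FreeSemigroup X) : toL (u * v) = toL u ++ toL v := rfl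

def wrd (r : Rel X) (d : Bool) : List X := toL (if d then r.1 else r.2)

lemma wrd_ne_nil (r : Rel X) (d : Bool) : wrd r d ≠ [] := by
  cases d <;> exact toL_ne_nil _

@[simp] lemma wrd_not_not (r : Rel X) (d : Bool) : wrd r (!(!d)) = wrd r d := by simp

lemma wrd_eq (r : Rel X) (d : Bool) :
    wrd r d = edgeStart firstLetter (r, d) :: (if d then r.1.tail else r.2.tail) := by
  cases d <;> rfl

lemma edgeStart_not (side : FreeSemigroup X → X) (r : Rel X) (d : Bool) :
    edgeStart side (r, !d) = edgeEnd side (r, d) := by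
  cases d <;> rfl

variable (R : Set (Rel X))

inductive Deriv : ℕ → List X → List X → Prop
  | nil (a) : Deriv 0 a a
  | cons {n : ℕ} {c : List X} (r : Rel X) (d : Bool) (p q : List X) (hr : r ∈ R)
      (h : Deriv n (p ++ wrd r (!d) ++ q) c) : Deriv (n + 1) (p ++ wrd r d ++ q) c

variable {R}

lemma Deriv.trans {n m : ℕ} {a b c : List X} (h₁ : Deriv R n a b) (h₂ : Deriv R m b c) :
    Deriv R (n + m) a c := by
  induction h₁ with
  | nil => simpa using h₂
  | cons r d p q hr h ih =>
      have := Deriv.cons r d p q hr (ih h₂)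
      simpa [Nat.succ_add] using this

lemma Deriv.single {r : Rel X} (hr : r ∈ R) (d : Bool) (p q : List X) :
    Deriv R 1 (p ++ wrd r d ++ q) (p ++ wrd r (!d) ++ q) :=
  Deriv.cons r d p q hr (Deriv.nil _)

lemma Deriv.symm {n : ℕ} {a b : List X} (h : Deriv R n a b) : Deriv R n b a := by
  induction h with
  | nil => exact Deriv.nil _
  | cons r d p q hr h ih =>
      have s : Deriv R 1 (p ++ wrd r (!d) ++ q) (p ++ wrd r d ++ q) := by
        simpa using Deriv.single hr (!d) p q
      simpa using ih.trans s

lemma Deriv.leftCtx {n : ℕ} {a b : List X} (c : List X) (h : Deriv R n a b) :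
    Deriv R n (c ++ a) (c ++ b) := by
  induction h with
  | nil => exact Deriv.nil _
  | cons r d p q hr h ih =>
      have := Deriv.cons (R := R) r d (c ++ p) q hr (by simpa [List.append_assoc] using ih)
      simpa [List.append_assoc] using this

lemma Deriv.rightCtx {n : ℕ} {a b : List X} (c : List X) (h : Deriv R n a b) :
    Deriv R n (a ++ c) (b ++ c) := by
  induction h with
  | nil => exact Deriv.nil _
  | cons r d p q hr h ih =>
      have := Deriv.cons (R := R) r d p (q ++ c) hr (by simpa [List.append_assoc] using ih)
      simpa [List.append_assoc] using this

lemma Deriv.eq_nil {n : ℕ} {a b : List X} (h : Deriv R n a b) (ha : a = []) : b = [] := by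
  induction h with
  | nil => exact ha
  | cons r d p q hr h ih =>
      exfalso
      rcases List.append_eq_nil_iff.1 ha with ⟨h1, -⟩
      rcases List.append_eq_nil_iff.1 h1 with ⟨-, h2⟩
      exact wrd_ne_nil r d h2

lemma ofCon {u v : FreeSemigroup X} (h : ConGen.Rel (fun a b => (a, b) ∈ R) u v) :
    ∃ n, Deriv R n (toL u) (toL v) := by
  induction h with
  | of u v huv =>
      refine ⟨1, ?_⟩
      have := Deriv.single (R := R) huv true ([] : List X) ([] : List X)
      simpa [wrd, toL] using this
  | refl x => exact ⟨0, Deriv.nil _⟩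
  | symm _ ih => exact ih.imp fun n h => h.symm
  | trans _ _ ih₁ ih₂ =>
      obtain ⟨n, h₁⟩ := ih₁; obtain ⟨m, h₂⟩ := ih₂
      exact ⟨n + m, h₁.trans h₂⟩
  | mul _ _ ih₁ ih₂ =>
      obtain ⟨n, h₁⟩ := ih₁; obtain ⟨m, h₂⟩ := ih₂
      refine ⟨n + m, ?_⟩
      rw [toL_mul, toL_mul]
      exact (h₁.rightCtx _).trans (h₂.leftCtx _)


lemma Deriv.cast {n m : ℕ} {a b : List X} (h : Deriv R n a b) (e : n = m) : Deriv R m a b :=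
  e ▸ h
variable (R)

inductive NPDeriv : ℕ → List X → List X → Prop
  | nil (a) : NPDeriv 0 a a
  | cons {n : ℕ} {c : List X} (r : Rel X) (d : Bool) (x : X) (p q : List X) (hr : r ∈ R)
      (h : NPDeriv n (x :: (p ++ wrd r (!d) ++ q)) c) :
      NPDeriv (n + 1) (x :: (p ++ wrd r d ++ q)) c

inductive PDeriv : ℕ → List X → List X → List (Rel X × Bool) → Prop
  | base {n : ℕ} {a b : List X} (h : NPDeriv R n a b) : PDeriv n a b []
  | cons {n₁ n₂ : ℕ} {a b : List X} {es : List (Rel X × Bool)}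
      (r : Rel X) (d : Bool) (s : List X) (hr : r ∈ R)
      (h₁ : NPDeriv R n₁ a (wrd r d ++ s))
      (h₂ : PDeriv n₂ (wrd r (!d) ++ s) b es) :
      PDeriv (n₁ + 1 + n₂) a b ((r, d) :: es)

variable {R}

lemma NPDeriv.toDeriv {n : ℕ} {a b : List X} (h : NPDeriv R n a b) : Deriv R n a b := by
  induction h with
  | nil => exact Deriv.nil _
  | cons r d x p q hr h ih =>
      have := Deriv.cons (R := R) r d (x :: p) q hr (by simpa using ih)
      simpa using this

lemma NPDeriv.strip {n : ℕ} {a c : List X} (h : NPDeriv R n a c) :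
    ∀ x s, a = x :: s → ∃ t, c = x :: t ∧ Deriv R n s t := by
  induction h with
  | nil a => intro x s hxs; exact ⟨s, hxs, Deriv.nil _⟩
  | cons r d x p q hr h ih =>
      intro x' s hxs
      injection hxs with hx hs
      subst hx; subst hs
      obtain ⟨t, hct, hD⟩ := ih x (p ++ wrd r (!d) ++ q) rfl
      exact ⟨t, hct, Deriv.cons r d p q hr hD⟩

lemma PDeriv.cast {n m : ℕ} {a b : List X} {es : List (Rel X × Bool)}
    (h : PDeriv R n a b es) (e : n = m) : PDeriv R m a b es := e ▸ h

lemma PDeriv.npcons {n : ℕ} {c : List X} {es : List (Rel X × Bool)}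
    (r : Rel X) (d : Bool) (x : X) (p q : List X) (hr : r ∈ R)
    (h : PDeriv R n (x :: (p ++ wrd r (!d) ++ q)) c es) :
    PDeriv R (n + 1) (x :: (p ++ wrd r d ++ q)) c es := by
  cases h with
  | base h => exact PDeriv.base (NPDeriv.cons r d x p q hr h)
  | cons r' d' s hr' h₁ h₂ =>
      exact (PDeriv.cons r' d' s hr' (NPDeriv.cons r d x p q hr h₁) h₂).cast (by omega)

lemma Deriv.toPDeriv {n : ℕ} {a b : List X} (h : Deriv R n a b) :
    ∃ es, PDeriv R n a b es := by
  induction h with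
  | nil => exact ⟨[], PDeriv.base (NPDeriv.nil _)⟩
  | @cons n c r d p q hr h ih =>
      obtain ⟨es, hes⟩ := ih
      cases p with
      | nil =>
          refine ⟨(r, d) :: es, ?_⟩
          have := PDeriv.cons (R := R) r d q hr (NPDeriv.nil _) (by simpa using hes)
          have h2 := this.cast (show 0 + 1 + n = n + 1 by omega)
          simpa using h2
      | cons x p' =>
          exact ⟨es, by simpa using PDeriv.npcons r d x p' q hr (by simpa using hes)⟩

lemma PDeriv.toDeriv {n : ℕ} {a b : List X} {es : List (Rel X × Bool)}
    (h : PDeriv R n a b es) : Deriv R n a b := by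
  induction h with
  | base h => exact h.toDeriv
  | cons r d s hr h₁ h₂ ih =>
      have step : Deriv R 1 (wrd r d ++ s) (wrd r (!d) ++ s) := by
        simpa using Deriv.single (R := R) hr d ([] : List X) s
      exact (h₁.toDeriv.trans (step.trans ih)).cast (by omega)


lemma PDeriv.mem_rel {n : ℕ} {a b : List X} {es : List (Rel X × Bool)}
    (h : PDeriv R n a b es) : ∀ e ∈ es, e.1 ∈ R := by
  induction h with
  | base h => simp
  | cons r d s hr h₁ h₂ ih =>
      intro e he
      rcases List.mem_cons.1 he with rfl | he'
      · exact hr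
      · exact ih e he'

lemma PDeriv.walk {n : ℕ} {a b : List X} {es : List (Rel X × Bool)}
    (h : PDeriv R n a b es) :
    ∀ x s, a = x :: s →
      es.Chain' (fun e f => edgeEnd firstLetter e = edgeStart firstLetter f) ∧
      (∀ hne : es ≠ [], edgeStart firstLetter (es.head hne) = x ∧
        ∃ t, b = edgeEnd firstLetter (es.getLast hne) :: t) ∧
      (es = [] → ∃ t, b = x :: t) := by
  induction h with
  | base h =>
      intro x s hxs
      obtain ⟨t, hb, -⟩ := h.strip x s hxs
      exact ⟨List.isChain_nil, fun hne => (hne rfl).elim, fun _ => ⟨t, hb⟩⟩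
  | @cons n₁ n₂ a b es r d s hr h₁ h₂ ih =>
      intro x s₀ hxs
      obtain ⟨t₀, hb₀, -⟩ := h₁.strip x s₀ hxs
      have hx : edgeStart firstLetter (r, d) = x := by
        rw [wrd_eq, List.cons_append] at hb₀
        exact (List.cons.inj hb₀).1
      have hstart₂ : wrd r (!d) ++ s = edgeEnd firstLetter (r, d) ::
          ((if !d then r.1.tail else r.2.tail) ++ s) := by
        rw [wrd_eq, edgeStart_not, List.cons_append]
      obtain ⟨chain_es, hne_es, hnil_es⟩ := ih (edgeEnd firstLetter (r, d)) _ hstart₂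
      refine ⟨?_, ?_, ?_⟩
      · refine List.isChain_cons.2 ⟨?_, chain_es⟩
        intro y hy
        have hne : es ≠ [] := by rintro rfl; simp at hy
        have : es.head? = some (es.head hne) := List.head?_eq_head hne
        rw [this] at hy
        obtain rfl : es.head hne = y := by injection hy
        exact ((hne_es hne).1).symm
      · intro hne'
        constructor
        · simpa using hx
        · clear chain_es
          cases es with
          | nil => simpa using hnil_es rfl
          | cons e es' =>
              have := (hne_es (List.cons_ne_nil _ _)).2
              simpa [List.getLast_cons] using this
      · intro h; simp at h

lemma dup_split {α β : Type*} (f : α → β) :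
    ∀ l : List α, ¬ (l.map f).Nodup →
      ∃ A s B t C, l = A ++ s :: B ++ t :: C ∧ f s = f t := by
  intro l
  induction l with
  | nil => intro h; simp at h
  | cons x l ih =>
      intro h
      by_cases hx : f x ∈ l.map f
      · obtain ⟨s, hs, hfs⟩ := List.mem_map.1 hx
        obtain ⟨B, C, rfl⟩ := List.append_of_mem hs
        exact ⟨[], x, B, s, C, by simp, hfs.symm⟩
      · have hnd : ¬ (l.map f).Nodup := fun hn => h (by simp [List.nodup_cons, hx, hn])
        obtain ⟨A, s, B, t, C, rfl, hst⟩ := ih hnd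
        exact ⟨x :: A, s, B, t, C, by simp, hst⟩

lemma backtrack {side : FreeSemigroup X → X} (hcf : ¬ HasCycle R side) :
    ∀ (N : ℕ) (es : List (Rel X × Bool)), es.length ≤ N → es ≠ [] →
      (∀ e ∈ es, e.1 ∈ R) →
      es.Chain' (fun e f => edgeEnd side e = edgeStart side f) →
      (∀ hne : es ≠ [], edgeEnd side (es.getLast hne) = edgeStart side (es.head hne)) →
      ∃ es₁ r d es₂, es = es₁ ++ ((r, d) :: (r, !d) :: es₂) := by
  intro N
  induction N with
  | zero =>
      intro es hl hne
      exact (hne (List.eq_nil_of_length_eq_zero (Nat.le_zero.1 hl))).elim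
  | succ N ihN =>
      intro es hlen hne hmem hchain hclose
      by_cases hnd : (es.map Prod.fst).Nodup
      · exact absurd ⟨es, hne, hmem, hchain, hclose, hnd⟩ hcf
      · obtain ⟨A, s, B, t, C, hsplit, hst⟩ := dup_split Prod.fst es hnd
        have hsplit' : es = A ++ ((s :: B) ++ (t :: C)) := by simpa using hsplit
        rw [hsplit'] at hchain
        have h2 := (List.isChain_append.1 hchain).2.1
        obtain ⟨hsB, htC, hcross⟩ := List.isChain_append.1 h2
        have hlastsB : (s :: B).getLast? = some ((s :: B).getLast (List.cons_ne_nil _ _)) :=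
          List.getLast?_eq_getLast _
        have hEt : edgeEnd side ((s :: B).getLast (List.cons_ne_nil _ _)) = edgeStart side t :=
          hcross _ hlastsB t rfl
        by_cases hd : s.2 = t.2
        · have hts : t = s := Prod.ext_iff.2 ⟨hst.symm, hd.symm⟩
          have hWlen : (s :: B).length ≤ N := by
            rw [hsplit'] at hlen; simp at hlen ⊢; omega
          have hWmem : ∀ e ∈ s :: B, e.1 ∈ R := by
            intro e he
            refine hmem e ?_
            rw [hsplit', List.mem_append, List.mem_append]
            exact Or.inr (Or.inl he)
          obtain ⟨y₁, r, d, y₂, hW⟩ := ihN (s :: B) hWlen (List.cons_ne_nil _ _) hWmem hsB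
            (fun hne' => hEt.trans (by rw [hts]; rfl))
          refine ⟨A ++ y₁, r, d, y₂ ++ t :: C, ?_⟩
          rw [hsplit', hW]; simp
        · have ht2 : t.2 = !s.2 := by
            cases hs2 : s.2 <;> cases ht2' : t.2 <;> simp_all
          have ht' : t = (s.1, !s.2) := Prod.ext_iff.2 ⟨hst.symm, ht2⟩
          cases B with
          | nil =>
              refine ⟨A, s.1, s.2, C, ?_⟩
              rw [hsplit', ht']
              simp
          | cons b₀ B' =>
              have hsb₀ : edgeEnd side s = edgeStart side b₀ := (List.isChain_cons_cons.1 hsB).1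
              have hWchain : (b₀ :: B').Chain'
                  (fun e f => edgeEnd side e = edgeStart side f) := (List.isChain_cons_cons.1 hsB).2
              have hlastW : (s :: b₀ :: B').getLast (List.cons_ne_nil _ _) =
                  (b₀ :: B').getLast (List.cons_ne_nil _ _) := List.getLast_cons _
              have step : edgeStart side t = edgeStart side b₀ := by
                rw [ht', edgeStart_not]
                exact hsb₀
              have hWclose : ∀ hne' : (b₀ :: B') ≠ [],
                  edgeEnd side ((b₀ :: B').getLast hne') = edgeStart side ((b₀ :: B').head hne') := by
                intro hne'
                exact (hlastW ▸ hEt).trans step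
              have hWlen : (b₀ :: B').length ≤ N := by
                rw [hsplit'] at hlen; simp at hlen ⊢; omega
              have hWmem : ∀ e ∈ b₀ :: B', e.1 ∈ R := by
                intro e he
                refine hmem e ?_
                rw [hsplit', List.mem_append, List.mem_append]
                exact Or.inr (Or.inl (List.mem_cons_of_mem _ he))
              obtain ⟨y₁, r, d, y₂, hW⟩ := ihN (b₀ :: B') hWlen (List.cons_ne_nil _ _)
                hWmem hWchain hWclose
              refine ⟨A ++ s :: y₁, r, d, y₂ ++ t :: C, ?_⟩
              rw [hsplit', hW]; simp

lemma stripAll {N : ℕ}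
    (ih : ∀ m x (s t : List X), m < N → Deriv R m (x :: s) (x :: t) → ∃ m' ≤ m, Deriv R m' s t) :
    ∀ (c : List X) {m : ℕ} {s t : List X}, m < N → Deriv R m (c ++ s) (c ++ t) →
      ∃ m' ≤ m, Deriv R m' s t := by
  intro c
  induction c with
  | nil => intro m s t _ h; exact ⟨m, le_rfl, by simpa using h⟩
  | cons x c ihc =>
      intro m s t hm h
      obtain ⟨m₁, hm₁, h₁⟩ := ih m x (c ++ s) (c ++ t) hm (by simpa using h)
      obtain ⟨m', hm', h'⟩ := ihc (hm₁.trans_lt hm) h₁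
      exact ⟨m', hm'.trans hm₁, h'⟩

lemma PDeriv.split {N : ℕ}
    (ih : ∀ m x (s t : List X), m < N → Deriv R m (x :: s) (x :: t) → ∃ m' ≤ m, Deriv R m' s t) :
    ∀ (es₁ : List (Rel X × Bool)) {n : ℕ} {a b : List X} {r : Rel X} {d : Bool}
      {es₂ : List (Rel X × Bool)}, n ≤ N →
      PDeriv R n a b (es₁ ++ ((r, d) :: (r, !d) :: es₂)) →
      ∃ m, m + 2 ≤ n ∧ Deriv R m a b := by
  intro es₁
  induction es₁ with
  | nil =>
      intro n a b r d es₂ hN h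
      rw [List.nil_append] at h
      cases h with
      | @cons n₁ n₂ _ _ _ r' d' s₀ hr h₁ h₂ =>
          cases h₂ with
          | @cons n₃ n₄ _ _ _ r'' d'' s₁ hr'' h₃ h₄ =>
              have hmid : Deriv R n₃ (wrd r (!d) ++ s₀) (wrd r (!d) ++ s₁) := h₃.toDeriv
              obtain ⟨m₃, hm₃, hmidD⟩ := stripAll ih (wrd r (!d)) (by omega) hmid
              have h₄' : Deriv R n₄ (wrd r d ++ s₁) b := by simpa using h₄.toDeriv
              have total := (h₁.toDeriv.trans ((hmidD.leftCtx (wrd r d)).trans h₄'))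
              exact ⟨n₁ + (m₃ + n₄), by omega, total⟩
  | cons e es₁' ihe =>
      intro n a b r d es₂ hN h
      rw [List.cons_append] at h
      cases h with
      | @cons n₁ n₂ _ _ _ r' d' s₀ hr' h₁ h₂ =>
          obtain ⟨m₂, hm₂, D₂⟩ := ihe (by omega) h₂
          have step : Deriv R 1 (wrd r' d' ++ s₀) (wrd r' (!d') ++ s₀) := by
            simpa using Deriv.single (R := R) hr' d' ([] : List X) s₀
          exact ⟨n₁ + (1 + m₂), by omega, h₁.toDeriv.trans (step.trans D₂)⟩

lemma main (hleft : ¬ HasCycle R firstLetter) :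
    ∀ (n : ℕ) (x : X) (s t : List X), Deriv R n (x :: s) (x :: t) → ∃ m ≤ n, Deriv R m s t := by
  intro n
  induction n using Nat.strong_induction_on with
  | _ n ih =>
  intro x s t h
  obtain ⟨es, hp⟩ := h.toPDeriv
  rcases eq_or_ne es [] with rfl | hne
  · cases hp with
    | base hnp =>
        obtain ⟨t', ht', hD⟩ := hnp.strip x s rfl
        injection ht' with _ h2
        exact ⟨n, le_rfl, h2 ▸ hD⟩
  · obtain ⟨hchain, hprop, -⟩ := hp.walk x s rfl
    have hmem := hp.mem_rel
    obtain ⟨hstart, t'', hb⟩ := hprop hne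
    have hclose : edgeEnd firstLetter (es.getLast hne) = x := by
      injection hb with h1 _
      exact h1.symm
    have hclose' : ∀ hne' : es ≠ [],
        edgeEnd firstLetter (es.getLast hne') = edgeStart firstLetter (es.head hne') :=
      fun _ => hclose.trans hstart.symm
    obtain ⟨es₁, r, d, es₂, hsplit⟩ :=
      backtrack hleft es.length es le_rfl hne hmem hchain hclose'
    rw [hsplit] at hp
    obtain ⟨m, hm2, hD⟩ :=
      PDeriv.split (N := n) (fun m x s t hm hD => ih m hm x s t hD) es₁ le_rfl hp
    obtain ⟨m', hm', hD'⟩ := ih m (by omega) x s t hD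
    exact ⟨m', by omega, hD'⟩

lemma no_self_ext (hleft : ¬ HasCycle R firstLetter) :
    ∀ (c w : List X) (n : ℕ), w ≠ [] → Deriv R n c (c ++ w) → False := by
  intro c
  induction c with
  | nil =>
      intro w n hw h
      have := h.eq_nil rfl
      simp at this
      exact hw this
  | cons x c ihc =>
      intro w n hw h
      have h' : Deriv R n (x :: c) (x :: (c ++ w)) := by simpa using h
      obtain ⟨m, -, hm⟩ := main hleft n x c (c ++ w) h'
      exact ihc w m hw hm

end AdianAux

/-- If `⟨X|R⟩` is an Adian presentation (its left graph and right graph are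
both cycle-free), then the semigroup `Sg⟨X|R⟩` (the quotient of the free semigroup `X⁺`
by the congruence generated by `R`) has no idempotent: no `w ∈ X⁺` satisfies `w = w²`. -/
theorem adian_semigroup_no_idempotent {X : Type*}
    (R : Set (FreeSemigroup X × FreeSemigroup X))
    (hleft : ¬ HasCycle R firstLetter) (hright : ¬ HasCycle R lastLetter) :
    ∀ w : FreeSemigroup X, ¬ (conGen fun a b => (a, b) ∈ R) w (w * w) := by
  intro w hw
  have h : ConGen.Rel (fun a b => (a, b) ∈ R) w (w * w) := hw
  obtain ⟨n, hD⟩ := AdianAux.ofCon h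
  rw [AdianAux.toL_mul] at hD
  exact AdianAux.no_self_ext hleft (AdianAux.toL w) (AdianAux.toL w) n (AdianAux.toL_ne_nil w) hD
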